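/- Let c ∈ ℝ, A < 0, b > 0, and let λ : [0,b] → ℝ be differentiable with λ(0) = 0 and λ(ρ) > 0 for all ρ ∈ (0,b), such that u := λ² is twice differentiable on [0,b] and satisfies u''(ρ) = 2A·u(ρ) + 2(1+c) for all ρ ∈ [0,b]. Then 1 + c > 0 and there exists a constant C > 0 such that λ(ρ) = C·sin(√(2|A|)·ρ/2) for all ρ ∈ [0,b]; in fact C = √(2(1+c)/|A|). -/

import Mathlib

/- STATEMENT 13: case A < 0 of the warping function ODE on [0,b]. If λ : [0,b] → ℝ is
differentiable, λ(0) = 0, λ > 0 on (0,b), and u = λ² is twice differentiable with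
u'' = 2Au + 2(1+c) on [0,b], then 1 + c > 0 and λ(ρ) = C·sin(√(2|A|)ρ/2) with
C = √(2(1+c)/|A|) > 0. -/
theorem stmt_13 (c A b : ℝ) (hA : A < 0) (hb : 0 < b) (lam u' : ℝ → ℝ)
    (hlam0 : lam 0 = 0)
    (hlampos : ∀ ρ : ℝ, 0 < ρ → ρ < b → 0 < lam ρ)
    (hdiff : ∀ ρ ∈ Set.Icc (0 : ℝ) b, DifferentiableWithinAt ℝ lam (Set.Icc 0 b) ρ)
    (hu : ∀ ρ ∈ Set.Icc (0 : ℝ) b,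
      HasDerivWithinAt (fun t => (lam t) ^ 2) (u' ρ) (Set.Icc 0 b) ρ)
    (hu'' : ∀ ρ ∈ Set.Icc (0 : ℝ) b,
      HasDerivWithinAt u' (2 * A * (lam ρ) ^ 2 + 2 * (1 + c)) (Set.Icc 0 b) ρ) :
    0 < 1 + c ∧ ∃ C : ℝ, 0 < C ∧ C = Real.sqrt (2 * (1 + c) / |A|) ∧
      ∀ ρ ∈ Set.Icc (0 : ℝ) b, lam ρ = C * Real.sin (Real.sqrt (2 * |A|) * ρ / 2) := by
  have hAabs : |A| = -A := abs_of_neg hA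
  have hAne : A ≠ 0 := ne_of_lt hA
  have h2A : (0:ℝ) < 2 * |A| := by rw [hAabs]; linarith
  set ω : ℝ := Real.sqrt (2 * |A|) with hωdef
  have hω : 0 < ω := Real.sqrt_pos.mpr h2A
  have hω2 : ω ^ 2 = -(2 * A) := by
    rw [hωdef, Real.sq_sqrt h2A.le, hAabs]; ring
  set u₀ : ℝ := -(1 + c) / A with hu₀def
  set v : ℝ → ℝ := fun ρ => lam ρ ^ 2 - u₀ * (1 - Real.cos (ω * ρ)) with hvdef
  set w : ℝ → ℝ := fun ρ => u' ρ - u₀ * ω * Real.sin (ω * ρ) with hwdef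
  have hUD : UniqueDiffOn ℝ (Set.Icc (0:ℝ) b) := uniqueDiffOn_Icc hb
  have h0mem : (0:ℝ) ∈ Set.Icc (0:ℝ) b := ⟨le_refl 0, hb.le⟩
  -- u'(0) = 0
  have hu'0 : u' 0 = 0 := by
    have h1 : HasDerivWithinAt (fun t => (lam t) ^ 2)
        ((2:ℕ) * lam 0 ^ (2-1) * derivWithin lam (Set.Icc 0 b) 0) (Set.Icc 0 b) 0 :=
      ((hdiff 0 h0mem).hasDerivWithinAt).pow 2
    have h2 := (hu 0 h0mem).derivWithin (hUD 0 h0mem)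
    have h3 := h1.derivWithin (hUD 0 h0mem)
    rw [h3] at h2
    rw [← h2, hlam0]
    simp
  -- derivative of v is w
  have hv' : ∀ ρ ∈ Set.Icc (0:ℝ) b, HasDerivWithinAt v (w ρ) (Set.Icc 0 b) ρ := by
    intro ρ hρ
    have hid : HasDerivAt (fun t : ℝ => ω * t) ω ρ := by
      simpa using (hasDerivAt_id ρ).const_mul ω
    have hcos : HasDerivWithinAt (fun t : ℝ => Real.cos (ω * t))
        (-Real.sin (ω * ρ) * ω) (Set.Icc 0 b) ρ := hid.cos.hasDerivWithinAt
    have : HasDerivWithinAt (fun t => lam t ^ 2 - u₀ * (1 - Real.cos (ω * t)))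
        (u' ρ - u₀ * (0 - (-Real.sin (ω * ρ) * ω))) (Set.Icc 0 b) ρ :=
      (hu ρ hρ).sub (((hasDerivWithinAt_const ρ _ (1:ℝ)).sub hcos).const_mul u₀)
    convert this using 1
    simp [hwdef]; ring
  -- derivative of w is -(ω^2) * v
  have hw' : ∀ ρ ∈ Set.Icc (0:ℝ) b,
      HasDerivWithinAt w (-(ω ^ 2) * v ρ) (Set.Icc 0 b) ρ := by
    intro ρ hρ
    have hid : HasDerivAt (fun t : ℝ => ω * t) ω ρ := by
      simpa using (hasDerivAt_id ρ).const_mul ω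
    have hsin : HasDerivWithinAt (fun t : ℝ => Real.sin (ω * t))
        (Real.cos (ω * ρ) * ω) (Set.Icc 0 b) ρ := hid.sin.hasDerivWithinAt
    have : HasDerivWithinAt w
        (2 * A * lam ρ ^ 2 + 2 * (1 + c) - u₀ * ω * (Real.cos (ω * ρ) * ω))
        (Set.Icc 0 b) ρ := (hu'' ρ hρ).sub (hsin.const_mul (u₀ * ω))
    convert this using 1
    have hu₀A : u₀ * A = -(1 + c) := by
      rw [hu₀def]; field_simp
    simp only [hvdef]
    have : u₀ * ω * (Real.cos (ω * ρ) * ω) = u₀ * ω ^ 2 * Real.cos (ω * ρ) := by ring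
    rw [this, hω2]
    nlinarith [hu₀A]
  -- energy is constant
  set E : ℝ → ℝ := fun ρ => w ρ ^ 2 + ω ^ 2 * v ρ ^ 2 with hEdef
  have hE' : ∀ ρ ∈ Set.Icc (0:ℝ) b, HasDerivWithinAt E 0 (Set.Icc 0 b) ρ := by
    intro ρ hρ
    have h1 : HasDerivWithinAt (fun t => w t ^ 2)
        ((2:ℕ) * w ρ ^ (2-1) * (-(ω ^ 2) * v ρ)) (Set.Icc 0 b) ρ := (hw' ρ hρ).pow 2
    have h2 : HasDerivWithinAt (fun t => v t ^ 2)
        ((2:ℕ) * v ρ ^ (2-1) * w ρ) (Set.Icc 0 b) ρ := (hv' ρ hρ).pow 2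
    have := h1.add (h2.const_mul (ω ^ 2))
    exact this.congr_deriv (by push_cast; ring)
  have hEconst : ∀ ρ ∈ Set.Icc (0:ℝ) b, E ρ = E 0 := by
    apply constant_of_has_deriv_right_zero
    · intro x hx
      exact ((hE' x hx).differentiableWithinAt).continuousWithinAt
    · intro x hx
      exact (hE' x (Set.mem_Icc_of_Ico hx)).mono_of_mem_nhdsWithin (Icc_mem_nhdsGE_of_mem hx)
  have hE0 : E 0 = 0 := by
    simp [hEdef, hwdef, hvdef, hlam0, hu'0]
  -- v ≡ 0
  have hv0 : ∀ ρ ∈ Set.Icc (0:ℝ) b, v ρ = 0 := by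
    intro ρ hρ
    have h := hEconst ρ hρ
    rw [hE0] at h
    simp only [hEdef] at h
    have hω2pos : 0 < ω ^ 2 := by positivity
    have h2 : v ρ ^ 2 = 0 := by nlinarith [sq_nonneg (w ρ), sq_nonneg (v ρ)]
    exact (pow_eq_zero_iff two_ne_zero).mp h2
  -- key formula
  have key : ∀ ρ ∈ Set.Icc (0:ℝ) b, lam ρ ^ 2 = 2 * u₀ * Real.sin (ω * ρ / 2) ^ 2 := by
    intro ρ hρ
    have h := hv0 ρ hρ
    have hs : Real.sin (ω * ρ / 2) ^ 2 = 1 / 2 - Real.cos (2 * (ω * ρ / 2)) / 2 :=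
      Real.sin_sq_eq_half_sub _
    have h2 : (2 : ℝ) * (ω * ρ / 2) = ω * ρ := by ring
    rw [h2] at hs
    simp only [hvdef, sub_eq_zero] at h
    rw [h, hs]; ring
  -- positivity of u₀ and 1 + c
  have hu₀pos : 0 < u₀ := by
    have hmem : b / 2 ∈ Set.Icc (0:ℝ) b := ⟨by linarith, by linarith⟩
    have hl := hlampos (b/2) (by linarith) (by linarith)
    have := key (b/2) hmem
    nlinarith [sq_nonneg (Real.sin (ω * (b/2) / 2)), sq_nonneg (lam (b/2))]
  have hc : 0 < 1 + c := by
    rw [hu₀def] at hu₀pos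
    by_contra h
    push_neg at h
    have : -(1 + c) / A ≤ 0 := div_nonpos_of_nonneg_of_nonpos (by linarith) hA.le
    linarith
  -- ω b ≤ 2π
  have hωb : ω * b ≤ 2 * Real.pi := by
    by_contra h
    push_neg at h
    set ρ₀ : ℝ := 2 * Real.pi / ω with hρ₀def
    have hρ₀pos : 0 < ρ₀ := by positivity
    have hρ₀lt : ρ₀ < b := by
      rw [hρ₀def, div_lt_iff₀ hω]
      linarith [mul_comm ω b ▸ h]
    have hmem : ρ₀ ∈ Set.Icc (0:ℝ) b := ⟨hρ₀pos.le, hρ₀lt.le⟩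
    have hsin : Real.sin (ω * ρ₀ / 2) = 0 := by
      have : ω * ρ₀ / 2 = Real.pi := by
        rw [hρ₀def]
        field_simp
      rw [this, Real.sin_pi]
    have := key ρ₀ hmem
    rw [hsin] at this
    have hl := hlampos ρ₀ hρ₀pos hρ₀lt
    nlinarith
  -- lam nonneg on Icc
  have hlamnn : ∀ ρ ∈ Set.Icc (0:ℝ) b, 0 ≤ lam ρ := by
    intro ρ hρ
    rcases eq_or_lt_of_le hρ.1 with h0 | h0
    · rw [← h0, hlam0]
    rcases eq_or_lt_of_le hρ.2 with hb' | hb'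
    · -- ρ = b : continuity argument
      subst hb'
      have hcont : ContinuousWithinAt lam (Set.Icc 0 ρ) ρ :=
        (hdiff ρ hρ).continuousWithinAt
      have hne : (nhdsWithin ρ (Set.Ioo (0:ℝ) ρ)).NeBot := by
        apply mem_closure_iff_nhdsWithin_neBot.mp
        rw [closure_Ioo (ne_of_lt h0)]
        exact ⟨h0.le, le_refl ρ⟩
      have htend : Filter.Tendsto lam (nhdsWithin ρ (Set.Ioo 0 ρ)) (nhds (lam ρ)) :=
        hcont.tendsto.mono_left (nhdsWithin_mono ρ Set.Ioo_subset_Icc_self)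
      refine ge_of_tendsto htend ?_
      filter_upwards [self_mem_nhdsWithin] with x hx
      exact (hlampos x hx.1 hx.2).le
    · exact (hlampos ρ h0 hb').le
  -- final construction
  refine ⟨hc, Real.sqrt (2 * (1 + c) / |A|), ?_, rfl, ?_⟩
  · apply Real.sqrt_pos.mpr
    apply div_pos (by linarith) (by rw [hAabs]; linarith)
  · intro ρ hρ
    set C := Real.sqrt (2 * (1 + c) / |A|) with hCdef
    have hu₀' : u₀ = (1 + c) / |A| := by
      rw [hu₀def, hAabs, div_neg, neg_div]
    have hC2 : C ^ 2 = 2 * u₀ := by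
      rw [hCdef, Real.sq_sqrt (div_nonneg (by linarith) (abs_nonneg A)), hu₀',
        mul_div_assoc]
    have hsin_nn : 0 ≤ Real.sin (ω * ρ / 2) := by
      apply Real.sin_nonneg_of_nonneg_of_le_pi
      · exact div_nonneg (mul_nonneg hω.le hρ.1) (by norm_num)
      · have h3 : ω * ρ ≤ ω * b := mul_le_mul_of_nonneg_left hρ.2 hω.le
        linarith
    have hCpos : 0 ≤ C := Real.sqrt_nonneg _
    have hsq : lam ρ ^ 2 = (C * Real.sin (ω * ρ / 2)) ^ 2 := by
      rw [key ρ hρ, mul_pow, hC2]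
    have h1 : |lam ρ| = |C * Real.sin (ω * ρ / 2)| := by
      rw [← Real.sqrt_sq_eq_abs, ← Real.sqrt_sq_eq_abs, hsq]
    rw [abs_of_nonneg (hlamnn ρ hρ), abs_of_nonneg (by positivity)] at h1
    exact h1
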